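/- Let K = ⋃_n A_n be a Fraïssé structure with an exhaustion by finite substructures. The following are equivalent: (i) for every m < ω there is n ≥ m such that for all f₀, f₁ ∈ Emb(A_m,K) there exist s ∈ Emb(A_n,K) and f ∈ Emb(A_m,A_n) with s∘ι_m = f₀ and s∘f = f₁, where ι_m ∈ Emb(A_m,A_n) is the inclusion embedding; (ii) for every m < ω, the equivalence relation on Emb(A_m,K) × Emb(A_m,K) given by (f₀,f₁) ∼ (h₀,h₁) iff there is g ∈ Aut(K) with g∘f₀ = h₀ and g∘f₁ = h₁ has only finitely many equivalence classes. -/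

import Mathlib

open FirstOrder Language Set Function

/-- Let `K = ⋃_n A_n` be a Fraïssé structure with an exhaustion by finite substructures.  The
following are equivalent (both characterize Roelcke precompactness of `Aut(K)`):
(i) for every `m` there is `n ≥ m` such that any two `f₀, f₁ ∈ Emb(A_m,K)` factor as
`f₀ = s∘ι_m`, `f₁ = s∘f` for a single `s ∈ Emb(A_n,K)` and some `f ∈ Emb(A_m,A_n)`, where
`ι_m` is the inclusion of `A_m` into `A_n`;
(ii) for every `m`, the relation on pairs from `Emb(A_m,K)` identifying `(f₀,f₁)` and
`(h₀,h₁)` when some `g ∈ Aut(K)` satisfies `g∘f₀ = h₀` and `g∘f₁ = h₁` has only finitely many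
classes. -/
theorem roelcke_precompact_characterizations {L : Language} {K : Type*} [L.Structure K]
    [Countable K] [L.IsRelational] [Countable L.Symbols]
    (hK : L.IsUltrahomogeneous K)
    (A : ℕ → L.Substructure K) (hmono : Monotone A)
    (hfin : ∀ n, ((A n : Set K)).Finite) (hcover : ∀ x : K, ∃ n, x ∈ A n) :
    (∀ m : ℕ, ∃ n : ℕ, ∃ hmn : m ≤ n, ∀ f₀ f₁ : ↥(A m) ↪[L] K,
      ∃ (s : ↥(A n) ↪[L] K) (f : ↥(A m) ↪[L] ↥(A n)),
        s.comp (Substructure.inclusion (hmono hmn)) = f₀ ∧ s.comp f = f₁) ↔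
    (∀ m : ℕ, Finite (Quot (fun p q : (↥(A m) ↪[L] K) × (↥(A m) ↪[L] K) =>
      ∃ g : K ≃[L] K, g.toEmbedding.comp p.1 = q.1 ∧ g.toEmbedding.comp p.2 = q.2))) := by
  have hfg : ∀ k, (A k).FG := fun k =>
    Substructure.fg_def.2 ⟨(A k : Set K), hfin k, (A k).closure_eq⟩
  have hfinsub : ∀ k, Finite ↥(A k) := fun k => (hfin k).to_subtype
  -- every finite subset of K is contained in some A n
  have hsub : ∀ s : Set K, s.Finite → ∃ n, s ⊆ ↑(A n) := by
    intro s hs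
    refine Set.Finite.induction_on (motive := fun s _ => ∃ n, s ⊆ ↑(A n)) s hs ⟨0, by simp⟩ ?_
    rintro a t _ _ ⟨n₁, hn₁⟩
    obtain ⟨n₂, hn₂⟩ := hcover a
    refine ⟨max n₁ n₂, Set.insert_subset ?_ ?_⟩
    · exact hmono (le_max_right n₁ n₂) hn₂
    · exact hn₁.trans (hmono (le_max_left n₁ n₂))
  constructor
  · -- (i) → (ii)
    intro hi m
    obtain ⟨n, hmn, hn⟩ := hi m
    have h1 := hfinsub m
    have h2 := hfinsub n
    have hembfin : Finite (↥(A m) ↪[L] ↥(A n)) :=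
      Finite.of_injective (fun f => (f : ↥(A m) → ↥(A n))) (fun f g h => DFunLike.coe_injective h)
    refine Finite.of_surjective (fun f : ↥(A m) ↪[L] ↥(A n) =>
      Quot.mk _ ((A n).subtype.comp (Substructure.inclusion (hmono hmn)),
        (A n).subtype.comp f)) ?_
    intro q
    obtain ⟨⟨f₀, f₁⟩, rfl⟩ := Quot.exists_rep q
    obtain ⟨s, f, hs0, hs1⟩ := hn f₀ f₁
    obtain ⟨g, hg⟩ := hK (A n) (hfg n) s
    refine ⟨f, Quot.sound ⟨g, ?_, ?_⟩⟩
    · rw [← Embedding.comp_assoc, ← hg]; exact hs0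
    · rw [← Embedding.comp_assoc, ← hg]; exact hs1
  · -- (ii) → (i)
    intro hii m
    have h1 := hfinsub m
    set r := fun p q : (↥(A m) ↪[L] K) × (↥(A m) ↪[L] K) =>
      ∃ g : K ≃[L] K, g.toEmbedding.comp p.1 = q.1 ∧ g.toEmbedding.comp p.2 = q.2 with hrdef
    have hQ : Finite (Quot r) := hii m
    have hrequiv : Equivalence r := by
      constructor
      · intro p
        exact ⟨Language.Equiv.refl L K, by ext x; rfl, by ext x; rfl⟩
      · rintro p q ⟨g, hg1, hg2⟩
        refine ⟨g.symm, ?_, ?_⟩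
        · rw [← hg1]; ext x
          exact g.symm_apply_apply (p.1 x)
        · rw [← hg2]; ext x
          exact g.symm_apply_apply (p.2 x)
      · rintro p q u ⟨g, hg1, hg2⟩ ⟨g', hg1', hg2'⟩
        refine ⟨g'.comp g, ?_, ?_⟩
        · ext x
          have e1 := DFunLike.congr_fun hg1 x
          have e1' := DFunLike.congr_fun hg1' x
          exact (congrArg (⇑g') e1).trans e1'
        · ext x
          have e2 := DFunLike.congr_fun hg2 x
          have e2' := DFunLike.congr_fun hg2' x
          exact (congrArg (⇑g') e2).trans e2'
    have hne : Nonempty (↥(A m) ↪[L] K) := ⟨(A m).subtype⟩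
    set e : (↥(A m) ↪[L] K) → Quot r := fun h => Quot.mk r ((A m).subtype, h) with hedef
    set rep : Quot r → (↥(A m) ↪[L] K) := Function.invFun e with hrepdef
    -- the union of the ranges of the representatives is finite
    have hUfin : (⋃ q : Quot r, Set.range ((rep q : ↥(A m) → K))).Finite :=
      Set.finite_iUnion (fun q => Set.finite_range _)
    obtain ⟨n₀, hn₀⟩ := hsub _ hUfin
    refine ⟨max m n₀, le_max_left m n₀, ?_⟩
    intro f₀ f₁
    obtain ⟨g₀, hg₀⟩ := hK (A m) (hfg m) f₀
    set h : ↥(A m) ↪[L] K := g₀.symm.toEmbedding.comp f₁ with hhdef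
    have hkey : e (rep (e h)) = e h := Function.invFun_eq ⟨h, rfl⟩
    have hrel : r ((A m).subtype, rep (e h)) ((A m).subtype, h) :=
      (hrequiv.eqvGen_iff).1 (Quot.eq.1 hkey)
    obtain ⟨g, hg1, hg2⟩ := hrel
    have hmem : ∀ x : ↥(A m), (rep (e h)) x ∈ A (max m n₀) := by
      intro x
      apply hmono (le_max_right m n₀)
      exact hn₀ (Set.mem_iUnion.2 ⟨e h, Set.mem_range_self x⟩)
    refine ⟨(g₀.toEmbedding.comp g.toEmbedding).comp (A (max m n₀)).subtype,
      Language.Embedding.codRestrict (A (max m n₀)) (rep (e h)) hmem, ?_, ?_⟩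
    · ext x
      have e1 : g ((A m).subtype x) = (A m).subtype x := by
        have := DFunLike.congr_fun hg1 x
        simpa using this
      have e0 : g₀ ((A m).subtype x) = f₀ x := by
        have := DFunLike.congr_fun hg₀ x
        simp only [Embedding.comp_apply] at this
        exact this.symm
      exact (congrArg (⇑g₀) e1).trans e0
    · ext x
      have e2 : g ((rep (e h)) x) = h x := by
        have := DFunLike.congr_fun hg2 x
        simpa using this
      exact (congrArg (⇑g₀) e2).trans (g₀.apply_symm_apply (f₁ x))
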